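/- Let X_1, ..., X_m be i.i.d. random vectors in R^d whose coordinates are i.i.d. samples from a zero-mean distribution with finite positive variance. Then for any fixed index j, the probability that X_j maximizes the inner product with itself over the collection, i.e. P[⟨X_j, X_j⟩ ≥ ⟨X_j, X_i⟩ for all i], tends to 1 as d → ∞. -/

import Mathlib

open MeasureTheory ProbabilityTheory Filter

/-- In high dimensions, each point of an i.i.d. zero-mean collection is its own
MIPS (maximum inner product search) solution with probability tending to 1. -/
theorem stmt0
    {Ω : Type*} [MeasurableSpace Ω] (P : Measure Ω) [IsProbabilityMeasure P]
    (m : ℕ)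
    (ξ : (d : ℕ) → Fin m → Fin d → Ω → ℝ)
    (v : ℝ) (hv : 0 < v)
    (hmeas : ∀ d i k, Measurable (ξ d i k))
    (hindep : ∀ d : ℕ, iIndepFun
        (fun p : Fin m × Fin d => ξ d p.1 p.2) P)
    (hident : ∀ (d d' : ℕ) (i : Fin m) (i' : Fin m) (k : Fin d) (k' : Fin d'),
        IdentDistrib (ξ d i k) (ξ d' i' k') P P)
    (hL2 : ∀ (d : ℕ) (i : Fin m) (k : Fin d), MemLp (ξ d i k) 2 P)
    (hmean : ∀ (d : ℕ) (i : Fin m) (k : Fin d), ∫ ω, ξ d i k ω ∂P = 0)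
    (hvar : ∀ (d : ℕ) (i : Fin m) (k : Fin d), ∫ ω, (ξ d i k ω) ^ 2 ∂P = v)
    (j : Fin m) :
    Tendsto
      (fun d : ℕ => (P {ω | ∀ i : Fin m,
          ∑ k : Fin d, ξ d j k ω * ξ d i k ω ≤
            ∑ k : Fin d, ξ d j k ω * ξ d j k ω}).toReal)
      atTop (nhds 1) := by
  classical
  set X : Ω → ℝ := ξ 1 j 0 with hXdef
  have hXmeas : Measurable X := hmeas 1 j 0
  -- truncated second moments tend to v
  have htrunc : Tendsto (fun n : ℕ => ∫ ω, min ((X ω) ^ 2) n ∂P) atTop (nhds v) := by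
    have h := integral_tendsto_of_tendsto_of_monotone (μ := P)
      (f := fun n ω => min ((X ω) ^ 2) n) (F := fun ω => (X ω) ^ 2)
      (fun n => ((hL2 1 j 0).integrable_sq.mono
        (((hXmeas.pow_const 2).min measurable_const).aestronglyMeasurable)
        (ae_of_all _ fun ω => by
          have h0 : (0:ℝ) ≤ min ((X ω) ^ 2) n := le_min (sq_nonneg _) (Nat.cast_nonneg n)
          rw [Real.norm_eq_abs, Real.norm_eq_abs, abs_of_nonneg h0, abs_of_nonneg (sq_nonneg _)]
          exact min_le_left _ _)))
      (hL2 1 j 0).integrable_sq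
      (ae_of_all _ fun ω n₁ n₂ h12 => min_le_min le_rfl (Nat.cast_le.2 h12))
      (ae_of_all _ fun ω => by
        refine tendsto_const_nhds.congr' ?_
        filter_upwards [tendsto_natCast_atTop_atTop.eventually_ge_atTop ((X ω) ^ 2)]
          with n hn
        exact (min_eq_left hn).symm)
    rwa [hvar 1 j 0] at h
  obtain ⟨c, hc⟩ : ∃ c : ℕ, v / 2 < ∫ ω, min ((X ω) ^ 2) c ∂P :=
    (htrunc.eventually (eventually_gt_nhds (by linarith))).exists
  set w : ℝ := ∫ ω, min ((X ω) ^ 2) c ∂P with hwdef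
  have hw : 0 < w := lt_of_le_of_lt (by linarith) hc
  set K : ℝ := (4 * (c:ℝ) ^ 2 + m * (4 * v ^ 2)) / w ^ 2 with hKdef
  have hK0 : 0 ≤ K := by positivity
  -- main per-dimension bound
  have hbound : ∀ d : ℕ, 0 < d →
      P ({ω | ∀ i : Fin m,
          ∑ k : Fin d, ξ d j k ω * ξ d i k ω ≤
            ∑ k : Fin d, ξ d j k ω * ξ d j k ω}ᶜ) ≤ ENNReal.ofReal (K / d) := by
    intro d hd
    have hdR : (0:ℝ) < d := by exact_mod_cast hd
    set t : ℝ := d * w / 2 with htdef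
    have ht : 0 < t := by positivity
    set Sd : Fin m → Ω → ℝ := fun i ω => ∑ k : Fin d, ξ d j k ω * ξ d i k ω with hSdef
    -- diagonal truncated variables
    set Wf : Fin d → Ω → ℝ := fun k ω => min ((ξ d j k ω) ^ 2) c with hWdef
    have hgmeas : Measurable (fun x : ℝ => min (x ^ 2) (c:ℝ)) :=
      (measurable_id.pow_const 2).min measurable_const
    have hWmeas : ∀ k, Measurable (Wf k) := fun k => hgmeas.comp (hmeas d j k)
    have hWbd : ∀ k ω, 0 ≤ Wf k ω ∧ Wf k ω ≤ c := fun k ω =>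
      ⟨le_min (sq_nonneg _) (Nat.cast_nonneg c), min_le_right _ _⟩
    have hWid : ∀ k, ∫ ω, Wf k ω ∂P = w := by
      intro k
      have h2 : IdentDistrib (Wf k) (fun ω => min ((X ω) ^ 2) c) P P :=
        (hident d 1 j j k 0).comp hgmeas
      exact h2.integral_eq
    have hWL2 : ∀ k, MemLp (Wf k) 2 P := fun k =>
      (memLp_top_of_bound (hWmeas k).aestronglyMeasurable c
        (ae_of_all _ fun ω => by
          rw [Real.norm_eq_abs, abs_of_nonneg (hWbd k ω).1]; exact (hWbd k ω).2)).mono_exponent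
        le_top
    have hWvar : ∀ k, variance (Wf k) P ≤ (c:ℝ) ^ 2 := by
      intro k
      rw [variance_eq_sub (hWL2 k)]
      have h1 : ∫ ω, (Wf k ω) ^ 2 ∂P ≤ (c:ℝ) ^ 2 := by
        have := integral_mono (hWL2 k).integrable_sq (integrable_const ((c:ℝ) ^ 2))
          (fun ω => by
            have := (hWbd k ω)
            simpa using pow_le_pow_left₀ this.1 this.2 2)
        simpa using this
      have h2 : (0:ℝ) ≤ (∫ ω, Wf k ω ∂P) ^ 2 := sq_nonneg _
      simp only [Pi.pow_apply]
      linarith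
    have hWindep : Set.Pairwise ↑(Finset.univ : Finset (Fin d))
        (fun k l => IndepFun (Wf k) (Wf l) P) := by
      intro k _ l _ hkl
      have h := (hindep d).indepFun
        (show ((j, k) : Fin m × Fin d) ≠ (j, l) by simp [hkl])
      exact h.comp hgmeas hgmeas
    set T : Ω → ℝ := ∑ k : Fin d, Wf k with hTdef
    have hTL2 : MemLp T 2 P := memLp_finsetSum' _ fun k _ => hWL2 k
    have hTapp : ∀ ω, T ω = ∑ k : Fin d, Wf k ω := fun ω => by
      simp [hTdef, Finset.sum_apply]
    have hTmean : ∫ ω, T ω ∂P = d * w := by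
      have : ∫ ω, T ω ∂P = ∑ k : Fin d, ∫ ω, Wf k ω ∂P := by
        simp_rw [hTapp]
        exact integral_finset_sum _ fun k _ => (hWL2 k).integrable one_le_two
      rw [this]
      simp [hWid, mul_comm]
    have hTvar : variance T P ≤ d * (c:ℝ) ^ 2 := by
      rw [hTdef, IndepFun.variance_sum (fun k _ => hWL2 k) hWindep]
      calc ∑ k : Fin d, variance (Wf k) P ≤ ∑ _k : Fin d, (c:ℝ) ^ 2 :=
            Finset.sum_le_sum fun k _ => hWvar k
        _ = d * (c:ℝ) ^ 2 := by simp [mul_comm]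
    have hdiag : P {ω | Sd j ω < t} ≤ ENNReal.ofReal (d * (c:ℝ) ^ 2 / t ^ 2) := by
      have hcheb := meas_ge_le_variance_div_sq (μ := P) hTL2 ht
      have hsub : {ω | Sd j ω < t} ⊆ {ω | t ≤ |T ω - ∫ x, T x ∂P|} := by
        intro ω hω
        have h1 : T ω ≤ Sd j ω := by
          rw [hTapp]
          refine Finset.sum_le_sum fun k _ => ?_
          calc Wf k ω ≤ (ξ d j k ω) ^ 2 := min_le_left _ _
            _ = ξ d j k ω * ξ d j k ω := sq (ξ d j k ω) ▸ by ring
        have h2 : Sd j ω < t := hω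
        simp only [Set.mem_setOf_eq]
        rw [hTmean]
        have hdw : (d:ℝ) * w = 2 * t := by rw [htdef]; ring
        have h3 : T ω - d * w ≤ -t := by linarith
        rw [le_abs]
        exact Or.inr (by linarith)
      calc P {ω | Sd j ω < t} ≤ P {ω | t ≤ |T ω - ∫ x, T x ∂P|} := measure_mono hsub
        _ ≤ ENNReal.ofReal (variance T P / t ^ 2) := hcheb
        _ ≤ ENNReal.ofReal (d * (c:ℝ) ^ 2 / t ^ 2) :=
            ENNReal.ofReal_le_ofReal (by gcongr)
    -- cross terms
    have hcross : ∀ i : Fin m, i ≠ j →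
        P {ω | t ≤ Sd i ω} ≤ ENNReal.ofReal (d * v ^ 2 / t ^ 2) := by
      intro i hij
      set Y : Fin d → Ω → ℝ := fun k ω => ξ d j k ω * ξ d i k ω with hYdef
      have hYmeas : ∀ k, Measurable (Y k) := fun k => (hmeas d j k).mul (hmeas d i k)
      have hYind1 : ∀ k, IndepFun (ξ d j k) (ξ d i k) P := fun k =>
        (hindep d).indepFun (show ((j, k) : Fin m × Fin d) ≠ (i, k) by
          simp [Ne.symm hij])
      have hsqind : ∀ k, IndepFun (fun ω => (ξ d j k ω) ^ 2) (fun ω => (ξ d i k ω) ^ 2) P :=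
        fun k => (hYind1 k).comp (measurable_id.pow_const 2) (measurable_id.pow_const 2)
      have hYsqint : ∀ k, Integrable (fun ω => (Y k ω) ^ 2) P := by
        intro k
        have := (hsqind k).integrable_mul (hL2 d j k).integrable_sq (hL2 d i k).integrable_sq
        simpa [hYdef, mul_pow, Pi.mul_def] using this
      have hYL2 : ∀ k, MemLp (Y k) 2 P := fun k =>
        (memLp_two_iff_integrable_sq (hYmeas k).aestronglyMeasurable).2 (hYsqint k)
      have hYmean : ∀ k, ∫ ω, Y k ω ∂P = 0 := by
        intro k
        have h := (hYind1 k).integral_mul_eq_mul_integral (hL2 d j k).aestronglyMeasurable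
          (hL2 d i k).aestronglyMeasurable
        have hj : integral P (ξ d j k) = 0 := hmean d j k
        rw [hj, zero_mul] at h
        exact h
      have hYvar : ∀ k, variance (Y k) P = v ^ 2 := by
        intro k
        rw [variance_eq_sub (hYL2 k)]
        have h1 : ∫ ω, (Y k ω) ^ 2 ∂P = v * v := by
          have h := (hsqind k).integral_fun_mul_eq_mul_integral (hL2 d j k).integrable_sq.aestronglyMeasurable
            (hL2 d i k).integrable_sq.aestronglyMeasurable
          rw [hvar d j k, hvar d i k] at h
          calc ∫ ω, (Y k ω) ^ 2 ∂P = ∫ ω, (ξ d j k ω) ^ 2 * (ξ d i k ω) ^ 2 ∂P := by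
                simp only [hYdef, mul_pow]
            _ = v * v := h
        simp only [Pi.pow_apply]
        rw [h1, hYmean k]
        ring
      have hYpair : Set.Pairwise ↑(Finset.univ : Finset (Fin d))
          (fun k l => IndepFun (Y k) (Y l) P) := by
        intro k _ l _ hkl
        have h := (hindep d).indepFun_prodMk_prodMk (fun p => hmeas d p.1 p.2)
          (j, k) (i, k) (j, l) (i, l)
          (by simp [hkl]) (by simp [hkl]) (by simp [hkl]) (by simp [hkl])
        exact h.comp measurable_mul measurable_mul
      set U : Ω → ℝ := ∑ k : Fin d, Y k with hUdef
      have hUapp : ∀ ω, U ω = Sd i ω := fun ω => by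
        simp [hUdef, hSdef, hYdef, Finset.sum_apply]
      have hUL2 : MemLp U 2 P := memLp_finsetSum' _ fun k _ => hYL2 k
      have hUmean : ∫ ω, U ω ∂P = 0 := by
        have : ∫ ω, U ω ∂P = ∑ k : Fin d, ∫ ω, Y k ω ∂P := by
          simp_rw [hUdef, Finset.sum_apply]
          exact integral_finset_sum _ fun k _ => (hYL2 k).integrable one_le_two
        rw [this]
        simp [hYmean]
      have hUvar : variance U P = d * v ^ 2 := by
        rw [hUdef, IndepFun.variance_sum (fun k _ => hYL2 k) hYpair]
        simp [hYvar, mul_comm]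
      have hcheb := meas_ge_le_variance_div_sq (μ := P) hUL2 ht
      have hsub : {ω | t ≤ Sd i ω} ⊆ {ω | t ≤ |U ω - ∫ x, U x ∂P|} := by
        intro ω hω
        simp only [Set.mem_setOf_eq] at hω ⊢
        rw [hUmean, sub_zero, hUapp ω]
        exact le_abs.2 (Or.inl hω)
      calc P {ω | t ≤ Sd i ω} ≤ P {ω | t ≤ |U ω - ∫ x, U x ∂P|} := measure_mono hsub
        _ ≤ ENNReal.ofReal (variance U P / t ^ 2) := hcheb
        _ = ENNReal.ofReal (d * v ^ 2 / t ^ 2) := by rw [hUvar]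
    -- combine
    have hsubset : ({ω | ∀ i : Fin m, Sd i ω ≤ Sd j ω}ᶜ : Set Ω) ⊆
        {ω | Sd j ω < t} ∪ ⋃ i ∈ Finset.univ.erase j, {ω | t ≤ Sd i ω} := by
      intro ω hω
      simp only [Set.mem_compl_iff, Set.mem_setOf_eq, not_forall, not_le] at hω
      obtain ⟨i, hi⟩ := hω
      by_cases h : Sd j ω < t
      · exact Or.inl h
      · push_neg at h
        refine Or.inr ?_
        have hij : i ≠ j := by
          intro he; rw [he] at hi; exact lt_irrefl _ hi
        refine Set.mem_biUnion (Finset.mem_erase.2 ⟨hij, Finset.mem_univ i⟩) ?_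
        exact le_trans h (le_of_lt hi)
    have hstep : P ({ω | ∀ i : Fin m, Sd i ω ≤ Sd j ω}ᶜ) ≤
        ENNReal.ofReal (d * (c:ℝ) ^ 2 / t ^ 2) +
          m * ENNReal.ofReal (d * v ^ 2 / t ^ 2) := by
      calc P ({ω | ∀ i : Fin m, Sd i ω ≤ Sd j ω}ᶜ)
          ≤ P ({ω | Sd j ω < t} ∪ ⋃ i ∈ Finset.univ.erase j, {ω | t ≤ Sd i ω}) :=
            measure_mono hsubset
        _ ≤ P {ω | Sd j ω < t} + P (⋃ i ∈ Finset.univ.erase j, {ω | t ≤ Sd i ω}) :=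
            measure_union_le _ _
        _ ≤ ENNReal.ofReal (d * (c:ℝ) ^ 2 / t ^ 2) +
              ∑ i ∈ Finset.univ.erase j, P {ω | t ≤ Sd i ω} :=
            add_le_add hdiag (measure_biUnion_finset_le _ _)
        _ ≤ ENNReal.ofReal (d * (c:ℝ) ^ 2 / t ^ 2) +
              ∑ i ∈ Finset.univ.erase j, ENNReal.ofReal (d * v ^ 2 / t ^ 2) :=
            add_le_add le_rfl (Finset.sum_le_sum fun i hi =>
              hcross i (Finset.mem_erase.1 hi).1)
        _ ≤ ENNReal.ofReal (d * (c:ℝ) ^ 2 / t ^ 2) +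
              m * ENNReal.ofReal (d * v ^ 2 / t ^ 2) := by
            rw [Finset.sum_const, nsmul_eq_mul]
            refine add_le_add le_rfl (mul_le_mul_left ?_ _)
            have hcard : (Finset.univ.erase j).card ≤ m :=
              (Finset.card_erase_le).trans (by simp)
            exact_mod_cast hcard
    have harith : d * (c:ℝ) ^ 2 / t ^ 2 + m * (d * v ^ 2 / t ^ 2) = K / d := by
      rw [htdef, hKdef]
      field_simp
      ring
    have hmcast : (m : ENNReal) * ENNReal.ofReal (d * v ^ 2 / t ^ 2)
        = ENNReal.ofReal (m * (d * v ^ 2 / t ^ 2)) := by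
      rw [ENNReal.ofReal_mul (by positivity : (0:ℝ) ≤ (m:ℝ)), ENNReal.ofReal_natCast]
    refine hstep.trans (le_of_eq ?_)
    rw [hmcast, ← ENNReal.ofReal_add (by positivity) (by positivity), harith]
  -- conclude by squeezing
  have hKd : Tendsto (fun d : ℕ => K / d) atTop (nhds 0) :=
    tendsto_const_div_atTop_nhds_zero_nat K
  refine tendsto_of_tendsto_of_tendsto_of_le_of_le'
    (g := fun d : ℕ => 1 - K / d) (h := fun _ : ℕ => (1:ℝ)) ?_ tendsto_const_nhds ?_ ?_
  · have h1 : Tendsto (fun d : ℕ => 1 - K / d) atTop (nhds (1 - 0)) :=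
      tendsto_const_nhds.sub hKd
    simpa using h1
  · filter_upwards [eventually_ge_atTop 1] with d hd
    have hb := hbound d hd
    set E : Set Ω := {ω | ∀ i : Fin m,
      ∑ k : Fin d, ξ d j k ω * ξ d i k ω ≤ ∑ k : Fin d, ξ d j k ω * ξ d j k ω} with hEdef
    have h1 : (1:ENNReal) ≤ P E + ENNReal.ofReal (K / d) := by
      calc (1:ENNReal) = P (E ∪ Eᶜ) := by rw [Set.union_compl_self, measure_univ]
        _ ≤ P E + P Eᶜ := measure_union_le _ _
        _ ≤ P E + ENNReal.ofReal (K / d) := add_le_add le_rfl hb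
    have hfin : P E + ENNReal.ofReal (K / d) ≠ ⊤ :=
      ENNReal.add_ne_top.2 ⟨measure_ne_top _ _, ENNReal.ofReal_ne_top⟩
    have h2 : (1:ℝ) ≤ (P E).toReal + K / d := by
      have := ENNReal.toReal_mono hfin h1
      rwa [ENNReal.toReal_one, ENNReal.toReal_add (measure_ne_top _ _) ENNReal.ofReal_ne_top,
        ENNReal.toReal_ofReal (by positivity)] at this
    linarith
  · filter_upwards with d
    exact ENNReal.toReal_le_of_le_ofReal one_pos.le (by simpa using prob_le_one)
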